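/- Let X = (X₁, X₂) ~ mt(μ, Σ, ν) with X₁ ∈ ℝ^{n₁}, X₂ ∈ ℝ^{n₂}, and partition μ = (μ₁, μ₂) and Σ into blocks Σ₁₁, Σ₁₂, Σ₂₁, Σ₂₂. Then the conditional distribution of X₁ given X₂ = x₂ is a multivariate t-distribution mt(μ_{1|2}, Σ_{1|2}, ν + n₂), where μ_{1|2} = μ₁ + Σ₁₂Σ₂₂⁻¹(x₂ - μ₂) and Σ_{1|2} = [(ν + (x₂-μ₂)ᵀΣ₂₂⁻¹(x₂-μ₂))/(ν + n₂)]·[Σ₁₁ - Σ₁₂Σ₂₂⁻¹Σ₂₁]. -/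

import Mathlib

open Matrix MeasureTheory Real

/-- Normalized multivariate t density `mt(μ, Σ, ν)`. -/
noncomputable def mtPdf {ι : Type*} [Fintype ι] [DecidableEq ι]
    (μ : ι → ℝ) (S : Matrix ι ι ℝ) (ν : ℝ) (x : ι → ℝ) : ℝ :=
  Real.Gamma ((ν + Fintype.card ι) / 2) /
      (Real.Gamma (ν / 2) * (ν * Real.pi) ^ ((Fintype.card ι : ℝ) / 2) * Real.sqrt S.det) *
    (1 + (x - μ) ⬝ᵥ (S⁻¹ *ᵥ (x - μ)) / ν) ^ (-((ν + Fintype.card ι) / 2))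

lemma mt_scalar (ν q₁ q₂ dD dS : ℝ) (n₁ n₂ : ℕ)
    (hν : 0 < ν) (hq₁ : 0 ≤ q₁) (hq₂ : 0 ≤ q₂) (hdD : 0 < dD) (hdS : 0 < dS) :
    Real.Gamma ((ν + ((n₁:ℝ) + (n₂:ℝ))) / 2) /
        (Real.Gamma (ν / 2) * (ν * π) ^ (((n₁:ℝ) + (n₂:ℝ)) / 2) * Real.sqrt (dD * dS)) *
        (1 + (q₁ + q₂) / ν) ^ (-((ν + ((n₁:ℝ) + (n₂:ℝ))) / 2))
      = Real.Gamma ((ν + (n₂:ℝ)) / 2) /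
          (Real.Gamma (ν / 2) * (ν * π) ^ ((n₂:ℝ) / 2) * Real.sqrt dD) *
          (1 + q₂ / ν) ^ (-((ν + (n₂:ℝ)) / 2)) *
        (Real.Gamma ((ν + (n₂:ℝ) + (n₁:ℝ)) / 2) /
            (Real.Gamma ((ν + (n₂:ℝ)) / 2) * ((ν + (n₂:ℝ)) * π) ^ ((n₁:ℝ) / 2) *
              Real.sqrt (((ν + q₂) / (ν + (n₂:ℝ))) ^ n₁ * dS)) *
          (1 + q₁ / ((ν + q₂) / (ν + (n₂:ℝ))) / (ν + (n₂:ℝ))) ^ (-((ν + (n₂:ℝ) + (n₁:ℝ)) / 2))) := by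
  have hπ : (0:ℝ) < π := Real.pi_pos
  have hP : (0:ℝ) < ν + (n₂:ℝ) := by positivity
  have hA : (0:ℝ) < ν + q₂ := by linarith
  have hT : (0:ℝ) < ν + (q₁ + q₂) := by linarith
  have hκ : (0:ℝ) < (ν + q₂) / (ν + (n₂:ℝ)) := div_pos hA hP
  have hg0 : (0:ℝ) < Real.Gamma (ν / 2) := Real.Gamma_pos_of_pos (by linarith)
  have hg1 : (0:ℝ) < Real.Gamma ((ν + (n₂:ℝ)) / 2) := Real.Gamma_pos_of_pos (by positivity)
  have hg2 : (0:ℝ) < Real.Gamma ((ν + ((n₁:ℝ) + (n₂:ℝ))) / 2) := Real.Gamma_pos_of_pos (by positivity)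
  have harg : ν + (n₂:ℝ) + (n₁:ℝ) = ν + ((n₁:ℝ) + (n₂:ℝ)) := by ring
  rw [harg]
  have e1 : 1 + (q₁ + q₂) / ν = (ν + (q₁ + q₂)) / ν := by field_simp
  have e2 : 1 + q₂ / ν = (ν + q₂) / ν := by field_simp
  have e3 : 1 + q₁ / ((ν + q₂) / (ν + (n₂:ℝ))) / (ν + (n₂:ℝ)) = (ν + (q₁ + q₂)) / (ν + q₂) := by
    field_simp
    ring
  rw [e1, e2, e3]
  -- helper: sqrt of exp
  have sqrt_exp : ∀ t : ℝ, Real.sqrt (Real.exp t) = Real.exp (t / 2) := by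
    intro t
    rw [show Real.exp t = Real.exp (t/2) ^ 2 by rw [sq, ← Real.exp_add, add_halves],
      Real.sqrt_sq (Real.exp_pos _).le]
  have s1 : Real.sqrt (dD * dS) = Real.exp ((Real.log dD + Real.log dS) / 2) := by
    rw [show dD * dS = Real.exp (Real.log dD + Real.log dS) by
      rw [Real.exp_add, Real.exp_log hdD, Real.exp_log hdS], sqrt_exp]
  have s2 : Real.sqrt (((ν + q₂) / (ν + (n₂:ℝ))) ^ n₁ * dS)
      = Real.exp (((n₁:ℝ) * (Real.log (ν + q₂) - Real.log (ν + (n₂:ℝ))) + Real.log dS) / 2) := by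
    rw [show ((ν + q₂) / (ν + (n₂:ℝ))) ^ n₁ * dS
        = Real.exp ((n₁:ℝ) * (Real.log (ν + q₂) - Real.log (ν + (n₂:ℝ))) + Real.log dS) by
      rw [Real.exp_add, Real.exp_log hdS, ← Real.log_div hA.ne' hP.ne', ← Real.log_pow,
        Real.exp_log (pow_pos hκ _)], sqrt_exp]
  have s0 : Real.sqrt dD = Real.exp (Real.log dD / 2) := by
    rw [show dD = Real.exp (Real.log dD) by rw [Real.exp_log hdD], sqrt_exp, Real.log_exp]
  rw [s1, s2, s0]
  simp only [Real.rpow_def_of_pos (mul_pos hν hπ), Real.rpow_def_of_pos (mul_pos hP hπ),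
    Real.rpow_def_of_pos (div_pos hT hν), Real.rpow_def_of_pos (div_pos hA hν),
    Real.rpow_def_of_pos (div_pos hT hA),
    Real.log_mul hν.ne' hπ.ne', Real.log_mul hP.ne' hπ.ne',
    Real.log_div hT.ne' hν.ne', Real.log_div hA.ne' hν.ne', Real.log_div hT.ne' hA.ne']
  rw [← Real.exp_log hg0, ← Real.exp_log hg1, ← Real.exp_log hg2]
  simp only [← Real.exp_add, ← Real.exp_sub, ← Real.exp_neg, div_mul_eq_mul_div,
    ← Real.exp_add, mul_div_assoc]
  rw [Real.exp_eq_exp]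
  ring

/-- Conditioning a multivariate t: if `(X₁, X₂) ~ mt((μ₁, μ₂), Σ, ν)` with
`Σ = [[Σ₁₁, Σ₁₂], [Σ₂₁, Σ₂₂]]`, then the conditional distribution of `X₁` given `X₂ = x₂`
(joint density divided by the marginal density of `X₂`, which is `mt(μ₂, Σ₂₂, ν)`) is
`mt(μ₁ + Σ₁₂Σ₂₂⁻¹(x₂ - μ₂), κ(x₂)·(Σ₁₁ - Σ₁₂Σ₂₂⁻¹Σ₂₁), ν + n₂)` with
`κ(x₂) = (ν + (x₂-μ₂)ᵀΣ₂₂⁻¹(x₂-μ₂))/(ν + n₂)`. -/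
theorem mt_conditional
    {ι₁ ι₂ : Type*} [Fintype ι₁] [DecidableEq ι₁] [Fintype ι₂] [DecidableEq ι₂]
    (μ₁ : ι₁ → ℝ) (μ₂ : ι₂ → ℝ)
    (S11 : Matrix ι₁ ι₁ ℝ) (S12 : Matrix ι₁ ι₂ ℝ) (S21 : Matrix ι₂ ι₁ ℝ)
    (S22 : Matrix ι₂ ι₂ ℝ) (ν : ℝ) (hν : 0 < ν)
    (hpd : (Matrix.fromBlocks S11 S12 S21 S22).PosDef) (hsym : S21 = S12ᵀ)
    (x₁ : ι₁ → ℝ) (x₂ : ι₂ → ℝ) :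
    mtPdf (Sum.elim μ₁ μ₂) (Matrix.fromBlocks S11 S12 S21 S22) ν (Sum.elim x₁ x₂)
      = mtPdf μ₂ S22 ν x₂ *
        mtPdf (μ₁ + (S12 * S22⁻¹) *ᵥ (x₂ - μ₂))
          (((ν + (x₂ - μ₂) ⬝ᵥ (S22⁻¹ *ᵥ (x₂ - μ₂))) / (ν + Fintype.card ι₂)) •
            (S11 - S12 * S22⁻¹ * S21))
          (ν + Fintype.card ι₂) x₁ := by
  classical
  obtain ⟨hS11h, hBC, hCB, hS22h⟩ := Matrix.isHermitian_fromBlocks_iff.mp hpd.1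
  -- S22 is positive definite
  have hD : S22.PosDef := by
    refine Matrix.PosDef.of_dotProduct_mulVec_pos hS22h fun y hy => ?_
    have hne : Sum.elim (0 : ι₁ → ℝ) y ≠ 0 := fun h => hy (funext fun i => congrFun h (Sum.inr i))
    have h0 := hpd.dotProduct_mulVec_pos hne
    simpa [Matrix.fromBlocks_mulVec, sumElim_dotProduct_sumElim, star_trivial] using h0
  have hS22det : IsUnit S22.det := isUnit_iff_ne_zero.mpr hD.det_pos.ne'
  haveI : Invertible S22 := S22.invertibleOfIsUnitDet hS22det
  have hS21 : S21 = S12ᴴ := by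
    rw [hsym, Matrix.conjTranspose_eq_transpose_of_trivial]
  have hS22t : S22ᵀ = S22 := by
    rw [← Matrix.conjTranspose_eq_transpose_of_trivial]; exact hS22h
  set Sc := S11 - S12 * S22⁻¹ * S21 with hScdef
  clear_value Sc
  have hSch : Sc.IsHermitian := by
    rw [hScdef]
    refine hS11h.sub ?_
    rw [hS21]
    simpa using Matrix.isHermitian_conjTranspose_mul_mul S12ᴴ hD.1.inv
  -- Schur complement is positive definite
  have hScpd : Sc.PosDef := by
    refine Matrix.PosDef.of_dotProduct_mulVec_pos hSch fun x hx => ?_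
    have hsc := Matrix.schur_complement_eq₂₂ S11 S12 x (-((S22⁻¹ * S12ᴴ) *ᵥ x)) hS22h
    rw [← hS21] at hsc
    simp only [add_neg_cancel, star_zero, Matrix.zero_vecMul, zero_dotProduct, zero_add] at hsc
    have hne : Sum.elim x (-((S22⁻¹ * S21) *ᵥ x)) ≠ 0 :=
      fun h => hx (funext fun i => congrFun h (Sum.inl i))
    have h0 := hpd.dotProduct_mulVec_pos hne
    rw [Matrix.dotProduct_mulVec] at h0
    rw [Matrix.dotProduct_mulVec, hScdef, ← hsc]
    exact h0
  have hScdet : IsUnit Sc.det := isUnit_iff_ne_zero.mpr hScpd.det_pos.ne'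
  have hMdet : IsUnit (Matrix.fromBlocks S11 S12 S21 S22).det :=
    isUnit_iff_ne_zero.mpr hpd.det_pos.ne'
  -- determinant factorization
  have hdet : (Matrix.fromBlocks S11 S12 S21 S22).det = S22.det * Sc.det := by
    rw [Matrix.det_fromBlocks₂₂, invOf_eq_nonsing_inv, ← hScdef]
  -- quadratic form decomposition
  set d₂ : ι₂ → ℝ := x₂ - μ₂ with hd₂def
  set v₁ : ι₁ → ℝ := x₁ - μ₁ with hv₁def
  set d₁ : ι₁ → ℝ := v₁ - (S12 * S22⁻¹) *ᵥ d₂ with hd₁def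
  set e₁ : ι₁ → ℝ := Sc⁻¹ *ᵥ d₁ with he₁def
  set e₂ : ι₂ → ℝ := S22⁻¹ *ᵥ d₂ - (S22⁻¹ * S21) *ᵥ e₁ with he₂def
  clear_value d₂ v₁ d₁ e₁ e₂
  have hMe : Matrix.fromBlocks S11 S12 S21 S22 *ᵥ Sum.elim e₁ e₂ = Sum.elim v₁ d₂ := by
    rw [Matrix.fromBlocks_mulVec]
    simp only [Sum.elim_comp_inl, Sum.elim_comp_inr]
    have hkey : Sc *ᵥ e₁ = d₁ := by
      rw [he₁def, Matrix.mulVec_mulVec, Matrix.mul_nonsing_inv _ hScdet, Matrix.one_mulVec]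
    have htop : S11 *ᵥ e₁ + S12 *ᵥ e₂ = v₁ := by
      rw [he₂def, Matrix.mulVec_sub, Matrix.mulVec_mulVec, Matrix.mulVec_mulVec,
        ← Matrix.mul_assoc]
      have : S11 *ᵥ e₁ - (S12 * S22⁻¹ * S21) *ᵥ e₁ = d₁ := by
        rw [← Matrix.sub_mulVec, ← hScdef, hkey]
      have h2 : S11 *ᵥ e₁ + ((S12 * S22⁻¹) *ᵥ d₂ - (S12 * S22⁻¹ * S21) *ᵥ e₁)
          = (S11 *ᵥ e₁ - (S12 * S22⁻¹ * S21) *ᵥ e₁) + (S12 * S22⁻¹) *ᵥ d₂ := by abel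
      rw [h2, this, hd₁def]
      abel
    have hbot : S21 *ᵥ e₁ + S22 *ᵥ e₂ = d₂ := by
      rw [he₂def, Matrix.mulVec_sub, Matrix.mulVec_mulVec, Matrix.mulVec_mulVec,
        Matrix.mul_nonsing_inv _ hS22det, Matrix.one_mulVec,
        Matrix.mul_nonsing_inv_cancel_left _ _ hS22det]
      abel
    rw [htop, hbot]
  have hsub : Sum.elim x₁ x₂ - Sum.elim μ₁ μ₂ = Sum.elim v₁ d₂ := by
    funext i; cases i <;> simp [hv₁def, hd₂def]
  have hw : d₂ ⬝ᵥ ((S22⁻¹ * S21) *ᵥ e₁) = ((S12 * S22⁻¹) *ᵥ d₂) ⬝ᵥ e₁ := by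
    have htr : S22⁻¹ * S21 = (S12 * S22⁻¹)ᵀ := by
      rw [Matrix.transpose_mul, Matrix.transpose_nonsing_inv, hS22t, ← hsym]
    rw [Matrix.dotProduct_mulVec, htr, Matrix.vecMul_transpose]
  have hinv : (Matrix.fromBlocks S11 S12 S21 S22)⁻¹ *ᵥ Sum.elim v₁ d₂ = Sum.elim e₁ e₂ := by
    rw [← hMe, Matrix.mulVec_mulVec, Matrix.nonsing_inv_mul _ hMdet, Matrix.one_mulVec]
  have hQ : (Sum.elim x₁ x₂ - Sum.elim μ₁ μ₂) ⬝ᵥ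
        ((Matrix.fromBlocks S11 S12 S21 S22)⁻¹ *ᵥ (Sum.elim x₁ x₂ - Sum.elim μ₁ μ₂))
      = d₁ ⬝ᵥ (Sc⁻¹ *ᵥ d₁) + d₂ ⬝ᵥ (S22⁻¹ *ᵥ d₂) := by
    rw [hsub, hinv, sumElim_dotProduct_sumElim, he₂def, dotProduct_sub, hw,
      ← he₁def]
    rw [hd₁def, sub_dotProduct]
    abel
  -- nonnegativity of quadratic forms
  have hq₁ : 0 ≤ d₁ ⬝ᵥ (Sc⁻¹ *ᵥ d₁) := by
    simpa [star_trivial] using hScpd.inv.posSemidef.dotProduct_mulVec_nonneg d₁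
  have hq₂ : 0 ≤ d₂ ⬝ᵥ (S22⁻¹ *ᵥ d₂) := by
    simpa [star_trivial] using hD.inv.posSemidef.dotProduct_mulVec_nonneg d₂
  -- the conditional location
  have hx₁sub : x₁ - (μ₁ + (S12 * S22⁻¹) *ᵥ d₂) = d₁ := by
    rw [hd₁def, hv₁def]; abel
  -- the scaling factor
  have hκpos : 0 < (ν + d₂ ⬝ᵥ (S22⁻¹ *ᵥ d₂)) / (ν + (Fintype.card ι₂ : ℝ)) := by
    have h1 : (0:ℝ) < ν + (Fintype.card ι₂ : ℝ) := by positivity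
    have h2 : (0:ℝ) < ν + d₂ ⬝ᵥ (S22⁻¹ *ᵥ d₂) := by linarith
    exact div_pos h2 h1
  haveI : Invertible ((ν + d₂ ⬝ᵥ (S22⁻¹ *ᵥ d₂)) / (ν + (Fintype.card ι₂ : ℝ))) :=
    invertibleOfNonzero hκpos.ne'
  have hκinv : (((ν + d₂ ⬝ᵥ (S22⁻¹ *ᵥ d₂)) / (ν + (Fintype.card ι₂ : ℝ))) • Sc)⁻¹
      = ((ν + d₂ ⬝ᵥ (S22⁻¹ *ᵥ d₂)) / (ν + (Fintype.card ι₂ : ℝ)))⁻¹ • Sc⁻¹ := by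
    rw [Matrix.inv_smul Sc ((ν + d₂ ⬝ᵥ (S22⁻¹ *ᵥ d₂)) / (ν + (Fintype.card ι₂ : ℝ))) hScdet,
      invOf_eq_inv]
  have hκdet : ((((ν + d₂ ⬝ᵥ (S22⁻¹ *ᵥ d₂)) / (ν + (Fintype.card ι₂ : ℝ)))) • Sc).det
      = (((ν + d₂ ⬝ᵥ (S22⁻¹ *ᵥ d₂)) / (ν + (Fintype.card ι₂ : ℝ)))) ^ (Fintype.card ι₁)
        * Sc.det :=
    Matrix.det_smul _ _
  have hcard : ((Fintype.card (ι₁ ⊕ ι₂) : ℕ) : ℝ)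
      = (Fintype.card ι₁ : ℝ) + (Fintype.card ι₂ : ℝ) := by
    rw [Fintype.card_sum]; push_cast; ring
  -- assemble
  simp only [mtPdf]
  rw [← hd₂def, hQ, hdet, hcard, hx₁sub, hκinv, hκdet, Matrix.smul_mulVec, dotProduct_smul,
    smul_eq_mul, inv_mul_eq_div]
  exact mt_scalar ν (d₁ ⬝ᵥ (Sc⁻¹ *ᵥ d₁)) (d₂ ⬝ᵥ (S22⁻¹ *ᵥ d₂)) S22.det Sc.det
    (Fintype.card ι₁) (Fintype.card ι₂) hν hq₁ hq₂ hD.det_pos hScpd.det_pos
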